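/- Let κ be a cardinal, and let G be an Ω_κ-system with X ⊆ ω^κ. Suppose Φ = ⟨Φ_f ∈ Ḡ_f | f ∈ X⟩ is a 1-coherent family (dΦ ∈ K^1(G ↾ X), i.e., for all f, g ∈ X, p_{f,f∧g}Φ_f − p_{g,f∧g}Φ_g has finite support), that A ⊆ X is such that Φ ↾ A is type I trivial via ψ ∈ lim Ḡ (for each g ∈ A, Φ_g agrees with the projection of ψ off a finite set), and that for every infinite E ⊆ κ and every h : E → ω there is g ∈ A with {α ∈ E | h(α) ≤ g(α)} infinite. Then ψ type-I-trivializes Φ on all of X: for every f ∈ X, Φ_f agrees with p_f(ψ) off a finite subset of κ. -/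
import Mathlib


/-- Propagation of type I trivializations for 1-coherent families of an `Ω_κ`-system.
Let `G` be an `Ω_κ`-system (groups `G α k` with compatible bonding maps `p`),
`X ⊆ ω^κ`, and `Φ = ⟨Φ_f ∈ Ḡ_f | f ∈ X⟩` a 1-coherent family: for all `f, g ∈ X`
the projections of `Φ_f` and `Φ_g` to `Ḡ_{f∧g}` differ in only finitely many
coordinates.  Suppose `ψ ∈ lim Ḡ` (a thread `⟨ψ_f⟩` compatible under the bonding
maps) type-I-trivializes `Φ` on a set `A ⊆ X` which, for every infinite `E ⊆ κ`
and every `h : κ → ω`, contains some `g` with `h(α) ≤ g(α)` for infinitely many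
`α ∈ E`.  Then `ψ` type-I-trivializes `Φ` on all of `X`. -/
theorem oneCoherent_trivialization_propagates
    {κ : Type*} {G : κ → ℕ → Type*} [∀ a k, AddCommGroup (G a k)]
    (p : ∀ a j k, k ≤ j → (G a j →+ G a k))
    (hid : ∀ a k, p a k k le_rfl = AddMonoidHom.id (G a k))
    (hcomp : ∀ a j k ℓ (h₁ : ℓ ≤ k) (h₂ : k ≤ j),
      (p a k ℓ h₁).comp (p a j k h₂) = p a j ℓ (h₁.trans h₂))
    (X : Set (κ → ℕ))
    (Φ : ∀ f : κ → ℕ, f ∈ X → ∀ a, G a (f a))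
    (hcoh : ∀ f (hf : f ∈ X) g (hg : g ∈ X),
      {a | p a (f a) (min (f a) (g a)) (min_le_left _ _) (Φ f hf a) ≠
           p a (g a) (min (f a) (g a)) (min_le_right _ _) (Φ g hg a)}.Finite)
    (ψ : ∀ f : κ → ℕ, ∀ a, G a (f a))
    (hψ : ∀ f g : κ → ℕ, ∀ h : f ≤ g, ∀ a, p a (g a) (f a) (h a) (ψ g a) = ψ f a)
    (A : Set (κ → ℕ)) (hAX : A ⊆ X)
    (htrivA : ∀ g (hg : g ∈ A), {a | Φ g (hAX hg) a ≠ ψ g a}.Finite)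
    (hA : ∀ E : Set κ, E.Infinite → ∀ h : κ → ℕ,
      ∃ g ∈ A, {a | a ∈ E ∧ h a ≤ g a}.Infinite) :
    ∀ f (hf : f ∈ X), {a | Φ f hf a ≠ ψ f a}.Finite := by
  intro f hf
  by_contra hE
  have hEinf : {a | Φ f hf a ≠ ψ f a}.Infinite := hE
  obtain ⟨g, hgA, hinf⟩ := hA _ hEinf f
  have hS := hcoh f hf g (hAX hgA)
  have hT := htrivA g hgA
  have hbig := (hinf.diff (hS.union hT)).nonempty
  obtain ⟨a, ⟨haE, hle⟩, hnot⟩ := hbig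
  simp only [Set.mem_union, Set.mem_setOf_eq, not_or, not_not] at hnot
  obtain ⟨hnS, hnT⟩ := hnot
  -- coherence and triviality at `a`
  have h1 : p a (f a) (min (f a) (g a)) (min_le_left _ _) (Φ f hf a) =
      p a (g a) (min (f a) (g a)) (min_le_right _ _) (Φ g (hAX hgA) a) := hnS
  -- use the thread ψ along f' = min f g
  set f' : κ → ℕ := fun b => min (f b) (g b) with hf'
  have hf'g : f' ≤ g := fun b => min_le_right _ _
  have hf'f : f' ≤ f := fun b => min_le_left _ _
  have h3 : p a (g a) (min (f a) (g a)) (min_le_right _ _) (ψ g a) = ψ f' a :=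
    hψ f' g hf'g a
  have h4 : p a (f a) (min (f a) (g a)) (min_le_left _ _) (ψ f a) = ψ f' a :=
    hψ f' f hf'f a
  have key : p a (f a) (min (f a) (g a)) (min_le_left _ _) (Φ f hf a) =
      p a (f a) (min (f a) (g a)) (min_le_left _ _) (ψ f a) := by
    rw [h1, hnT, h3, h4]
  have hm : min (f a) (g a) = f a := min_eq_left hle
  have cancel : ∀ (j k : ℕ) (h : k ≤ j), k = j → ∀ x y : G a j,
      p a j k h x = p a j k h y → x = y := by
    intro j k h hkj x y hxy
    subst hkj
    have hh : h = le_rfl := rfl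
    rw [hh, hid] at hxy
    simpa using hxy
  exact haE (cancel _ _ _ hm _ _ key)
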